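/- Let G be a connected finite graph and let C_1, …, C_k be a weakly fundamental cycle basis of G. Then the homotopy classes of the cycles C_1, …, C_k (based appropriately) form a free basis for the fundamental group π_1(G), which is a free group of rank k. Consequently, attaching a 2-cell along each C_i yields a simply connected 2-complex. -/

import Mathlib

open SimpleGraph

def walkChain {V : Type*} [DecidableEq V] {G : SimpleGraph V} {u v : V}
    (w : G.Walk u v) : Sym2 V → ZMod 2 :=
  fun s => if s ∈ w.edges then 1 else 0

def cycleCond {V : Type*} [Fintype V] [DecidableEq V] (G : SimpleGraph V)
    (c : Sym2 V → ZMod 2) : Prop :=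
  (∀ s : Sym2 V, c s ≠ 0 → s ∈ G.edgeSet) ∧
    ∀ x : V, (∑ s : Sym2 V, if x ∈ s then c s else 0) = 0

namespace WFCB
variable {V : Type} [Fintype V] [DecidableEq V] {G : SimpleGraph V}

lemma countP_parity {u v : V} (w : G.Walk u v) (x : V) :
    ((w.edges.countP (fun s => x ∈ s)) : ZMod 2)
      = (if x = u then 1 else 0) + (if x = v then 1 else 0) := by
  induction w with
  | nil =>
      rename_i z
      simp only [Walk.edges_nil, List.countP_nil, Nat.cast_zero]
      by_cases hx : x = z
      · simp only [hx, if_pos rfl]; decide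
      · simp [hx]
  | cons adj w ih =>
      rename_i a b c
      rw [Walk.edges_cons, List.countP_cons]
      by_cases hx : x ∈ s(a, b)
      · simp only [hx, decide_true, if_pos]
        push_cast
        rw [ih]
        rcases Sym2.mem_iff.1 hx with h1 | h1
        · subst h1
          rw [if_neg adj.ne, if_pos rfl]
          generalize (if x = c then (1 : ZMod 2) else 0) = t
          revert t; decide
        · subst h1
          rw [if_neg (Ne.symm adj.ne), if_pos rfl]
          generalize (if x = c then (1 : ZMod 2) else 0) = t
          revert t; decide
      · have hx' : ¬(x = a ∨ x = b) := by rwa [Sym2.mem_iff] at hx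
        push_neg at hx'
        simp only [hx, decide_false, Bool.false_eq_true, if_false, add_zero]
        rw [ih, if_neg hx'.1, if_neg hx'.2]

lemma sum_indicator_eq_countP {u v : V} (w : G.Walk u v) (hnod : w.edges.Nodup) (x : V) :
    (∑ s : Sym2 V, if x ∈ s then walkChain w s else 0)
      = ((w.edges.countP (fun s => x ∈ s)) : ZMod 2) := by
  classical
  have h1 : (∑ s : Sym2 V, if x ∈ s then walkChain w s else 0)
      = ∑ s ∈ Finset.univ.filter (fun s : Sym2 V => x ∈ s ∧ s ∈ w.edges), 1 := by
    rw [Finset.sum_filter]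
    refine Finset.sum_congr rfl fun s _ => ?_
    unfold walkChain
    by_cases h1 : x ∈ s <;> by_cases h2 : s ∈ w.edges <;> simp [h1, h2]
  rw [h1, Finset.sum_const, nsmul_eq_mul, mul_one]
  congr 1
  rw [List.countP_eq_length_filter]
  have h2 : Finset.univ.filter (fun s : Sym2 V => x ∈ s ∧ s ∈ w.edges)
      = (w.edges.filter (fun s => decide (x ∈ s))).toFinset := by
    ext s
    simp [List.mem_filter, and_comm]
  rw [h2, List.toFinset_card_of_nodup (hnod.filter _)]

lemma cycleCond_of_isCycle {v : V} (w : G.Walk v v) (hw : w.IsCycle) :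
    cycleCond G (walkChain w) := by
  constructor
  · intro s hs
    apply w.edges_subset_edgeSet
    by_contra hmem
    simp [walkChain, hmem] at hs
  · intro x
    rw [sum_indicator_eq_countP w hw.isTrail.edges_nodup, countP_parity]
    by_cases hx : x = v
    · simp only [hx, if_pos rfl]; decide
    · simp [hx]

end WFCB

namespace WFCB2
open WFCB
set_option linter.unusedSectionVars false
variable {V : Type} [Fintype V] [DecidableEq V] {G : SimpleGraph V}

lemma natCast_zmod2 (n : ℕ) : ((n : ZMod 2)) = if Odd n then 1 else 0 := by
  rcases Nat.even_or_odd n with he | ho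
  · rw [if_neg (by simpa [Nat.not_odd_iff_even] using he)]
    obtain ⟨m, rfl⟩ := he
    push_cast
    have h2 : (1 + 1 : ZMod 2) = 0 := by decide
    calc (m : ZMod 2) + m = (1 + 1) * m := by ring
    _ = 0 := by rw [h2, zero_mul]
  · rw [if_pos ho]
    obtain ⟨m, rfl⟩ := ho
    push_cast
    have h2 : (2 : ZMod 2) = 0 := by decide
    rw [h2, zero_mul, zero_add]

lemma cut_parity {c : Sym2 V → ZMod 2} (hc : cycleCond G c) (S : Finset V) :
    (∑ s : Sym2 V, if Odd ((S.filter (· ∈ s)).card) then c s else 0) = 0 := by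
  classical
  have h0 : (∑ x ∈ S, ∑ s : Sym2 V, if x ∈ s then c s else 0) = 0 := by
    rw [Finset.sum_congr rfl fun x _ => hc.2 x, Finset.sum_const, smul_zero]
  rw [Finset.sum_comm] at h0
  calc (∑ s : Sym2 V, if Odd ((S.filter (· ∈ s)).card) then c s else 0)
      = ∑ s : Sym2 V, ∑ x ∈ S, if x ∈ s then c s else 0 := by
        refine Finset.sum_congr rfl fun s _ => ?_
        rw [Finset.sum_ite, Finset.sum_const, Finset.sum_const_zero, add_zero,
          nsmul_eq_mul, natCast_zmod2, ite_mul, one_mul, zero_mul]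
    _ = 0 := h0

end WFCB2

namespace WFCB3
open WFCB WFCB2
set_option linter.unusedSectionVars false
variable {V : Type} [Fintype V] [DecidableEq V] {G : SimpleGraph V}
variable {k : ℕ} {r : Fin k → V} {C : ∀ i : Fin k, G.Walk (r i) (r i)} {e : Fin k → Sym2 V}

lemma crossing_pair {c : Sym2 V → ZMod 2} (hc : cycleCond G c) {S : Finset V} {s₀ : Sym2 V}
    (hodd : Odd ((S.filter (· ∈ s₀)).card)) (hcs : c s₀ ≠ 0) :
    ∃ s, s ≠ s₀ ∧ Odd ((S.filter (· ∈ s)).card) ∧ c s ≠ 0 := by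
  by_contra hcon
  push_neg at hcon
  have := cut_parity hc S
  rw [Finset.sum_eq_single s₀ (fun s _ hs => by
      by_cases ho : Odd ((S.filter (· ∈ s)).card)
      · rw [if_pos ho, hcon s hs ho]
      · rw [if_neg ho]) (fun hs => absurd (Finset.mem_univ s₀) hs)] at this
  rw [if_pos hodd] at this
  exact hcs this

lemma e_injective (he1 : ∀ i, e i ∈ (C i).edges)
    (he2 : ∀ i j, i < j → e i ∉ (C j).edges) : Function.Injective e := by
  intro i j hij
  by_contra hne
  rcases lt_or_gt_of_ne (fun hh : i = j => hne hh) with hlt | hlt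
  · exact he2 i j hlt (hij ▸ he1 j)
  · exact he2 j i hlt (hij ▸ he1 i)

lemma zero_of_cycleCond
    (hspan : ∀ c : Sym2 V → ZMod 2, cycleCond G c →
      c ∈ Submodule.span (ZMod 2) (Set.range fun i => walkChain (C i)))
    (he1 : ∀ i, e i ∈ (C i).edges)
    (he2 : ∀ i j, i < j → e i ∉ (C j).edges)
    {c : Sym2 V → ZMod 2} (hc : cycleCond G c) (hz : ∀ i, c (e i) = 0) : c = 0 := by
  obtain ⟨a, ha⟩ := Submodule.mem_span_range_iff_exists_fun (ZMod 2) |>.1 (hspan c hc)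
  have hA : ∀ i, a i = 0 := by
    by_contra hcon
    push_neg at hcon
    obtain ⟨i₀, hi₀⟩ := hcon
    set s : Finset (Fin k) := Finset.univ.filter (fun i => a i ≠ 0) with hs
    have hsne : s.Nonempty := ⟨i₀, by simp [hs, hi₀]⟩
    set m := s.min' hsne with hm
    have hmmem : m ∈ s := s.min'_mem hsne
    have hma : a m ≠ 0 := by simpa [hs] using hmmem
    have := congrFun ha (e m)
    rw [hz m, Finset.sum_apply] at this
    rw [Finset.sum_eq_single m (fun j _ hj => ?_) (fun hj => absurd (Finset.mem_univ m) hj)]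
      at this
    · apply hma
      have h1 : walkChain (C m) (e m) = 1 := if_pos (he1 m)
      rw [Pi.smul_apply, h1, smul_eq_mul, mul_one] at this
      exact this
    · rcases lt_trichotomy j m with hlt | heq | hgt
      · have : a j = 0 := by
          by_contra hja
          exact absurd (s.min'_le j (by simp [hs, hja])) (not_le.2 hlt)
        rw [Pi.smul_apply, this, zero_smul]
      · exact absurd heq hj
      · have : walkChain (C j) (e m) = 0 := if_neg (he2 m j hgt)
        rw [Pi.smul_apply, this, smul_zero]
  rw [← ha]
  funext s
  rw [Finset.sum_apply]
  exact Finset.sum_eq_zero fun i _ => by rw [Pi.smul_apply, hA i, zero_smul]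

lemma T_acyclic
    (hspan : ∀ c : Sym2 V → ZMod 2, cycleCond G c →
      c ∈ Submodule.span (ZMod 2) (Set.range fun i => walkChain (C i)))
    (he1 : ∀ i, e i ∈ (C i).edges)
    (he2 : ∀ i j, i < j → e i ∉ (C j).edges) :
    (G.deleteEdges (Set.range e)).IsAcyclic := by
  intro v w hw
  have hedges : ∀ s ∈ w.edges, s ∈ G.edgeSet ∧ s ∉ Set.range e := by
    intro s hs
    have := w.edges_subset_edgeSet hs
    rwa [edgeSet_deleteEdges, Set.mem_diff] at this
  let wG : G.Walk v v := w.transfer G (fun s hs => (hedges s hs).1)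
  have hcycG : wG.IsCycle := hw.transfer _
  have hedgesG : wG.edges = w.edges := w.edges_transfer _
  have hz : ∀ i, walkChain wG (e i) = 0 := by
    intro i
    apply if_neg
    rw [hedgesG]
    intro hmem
    exact (hedges _ hmem).2 ⟨i, rfl⟩
  have h0 := zero_of_cycleCond hspan he1 he2 (cycleCond_of_isCycle wG hcycG) hz
  have hlen := hcycG.three_le_length
  obtain ⟨s, hs⟩ : ∃ s, s ∈ wG.edges := by
    apply List.exists_mem_of_ne_nil
    intro hnil
    have := wG.length_edges
    rw [hnil] at this
    simp at this
    omega
  have : walkChain wG s = 1 := if_pos hs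
  rw [h0, Pi.zero_apply] at this
  exact zero_ne_one this

lemma card_filter_sym2 (S : Finset V) {u v : V} (hne : u ≠ v) :
    (S.filter (· ∈ s(u, v))).card
      = (if u ∈ S then 1 else 0) + (if v ∈ S then 1 else 0) := by
  classical
  have h1 : S.filter (· ∈ s(u, v)) = S.filter (fun x => x = u ∨ x = v) := by
    apply Finset.filter_congr
    intro x _
    simp [Sym2.mem_iff]
  rw [h1, Finset.filter_or, Finset.filter_eq', Finset.filter_eq']
  by_cases hu : u ∈ S <;> by_cases hv : v ∈ S
  · rw [if_pos hu, if_pos hv, Finset.card_union_of_disjoint (by simp [hne, Ne.symm hne])]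
    simp [hu, hv]
  · rw [if_pos hu, if_neg hv]
    simp [hu, hv]
  · rw [if_neg hu, if_pos hv]
    simp [hu, hv]
  · rw [if_neg hu, if_neg hv]
    simp [hu, hv]

lemma T_connected (hconn : G.Connected)
    (hspan : ∀ c : Sym2 V → ZMod 2, cycleCond G c →
      c ∈ Submodule.span (ZMod 2) (Set.range fun i => walkChain (C i)))
    (he1 : ∀ i, e i ∈ (C i).edges)
    (he2 : ∀ i j, i < j → e i ∉ (C j).edges)
    (hcyc : ∀ i, (C i).IsCycle) :
    (G.deleteEdges (Set.range e)).Connected := by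
  classical
  rw [connected_iff]
  refine ⟨?_, hconn.nonempty⟩
  by_contra hcon
  rw [Preconnected] at hcon
  push_neg at hcon
  obtain ⟨x₀, y₀, hnr⟩ := hcon
  set T := G.deleteEdges (Set.range e) with hT
  set S : Finset V := Finset.univ.filter (fun z => T.Reachable x₀ z) with hS
  have hSmem : ∀ z, z ∈ S ↔ T.Reachable x₀ z := by
    intro z; simp [hS]
  have hy₀ : y₀ ∉ S := fun hy => hnr ((hSmem y₀).1 hy)
  have hx₀ : x₀ ∈ S := (hSmem x₀).2 (Reachable.refl x₀)
  -- crossing G-edges are in range e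
  have hcross : ∀ u v : V, G.Adj u v → ((u ∈ S) ↔ ¬(v ∈ S)) → s(u, v) ∈ Set.range e := by
    intro u v hadj hxor
    by_contra hmem
    have hTadj : T.Adj u v := by
      rw [hT, deleteEdges_adj]
      exact ⟨hadj, hmem⟩
    have : u ∈ S ↔ v ∈ S := by
      rw [hSmem, hSmem]
      exact ⟨fun hr => hr.trans hTadj.reachable, fun hr => hr.trans hTadj.symm.reachable⟩
    tauto
  -- find a crossing edge along a G-walk from y₀ to x₀
  have hwalk : ∀ {x y : V} (w : G.Walk x y), x ∉ S → y ∈ S →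
      ∃ u v : V, G.Adj u v ∧ u ∉ S ∧ v ∈ S := by
    intro x y w
    induction w with
    | nil => intro hx hy; exact absurd hy hx
    | cons hadj w ih =>
      rename_i a b c
      intro hx hy
      by_cases hb : b ∈ S
      · exact ⟨a, b, hadj, hx, hb⟩
      · exact ih hb hy
  obtain ⟨u, v, hadj, huS, hvS⟩ := hwalk ((hconn y₀ x₀).some) hy₀ hx₀
  have hcrossuv : s(u, v) ∈ Set.range e := hcross u v hadj (by tauto)
  -- the set of crossing indices
  set cr : Finset (Fin k) := Finset.univ.filter
    (fun i => Odd ((S.filter (· ∈ e i)).card)) with hcr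
  have hoddmem : ∀ {a b : V}, a ≠ b → (a ∈ S ↔ ¬ b ∈ S) →
      Odd ((S.filter (· ∈ s(a, b))).card) := by
    intro a b hne hxor
    rw [card_filter_sym2 S hne]
    by_cases ha : a ∈ S
    · have hb : b ∉ S := (hxor.1 ha)
      simp [ha, hb]
    · have hb : b ∈ S := by tauto
      simp [ha, hb]
  have hcrne : cr.Nonempty := by
    obtain ⟨i, hi⟩ := hcrossuv
    refine ⟨i, ?_⟩
    rw [hcr, Finset.mem_filter]
    exact ⟨Finset.mem_univ i, by rw [hi]; exact hoddmem hadj.ne (by tauto)⟩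
  set i₀ := cr.max' hcrne with hi₀
  have hi₀mem : i₀ ∈ cr := cr.max'_mem hcrne
  have hi₀odd : Odd ((S.filter (· ∈ e i₀)).card) := by
    have := hi₀mem; rw [hcr, Finset.mem_filter] at this; exact this.2
  have hχ := cycleCond_of_isCycle (C i₀) (hcyc i₀)
  have hχs₀ : walkChain (C i₀) (e i₀) ≠ 0 := by
    rw [walkChain, if_pos (he1 i₀)]; exact one_ne_zero
  obtain ⟨s, hsne, hsodd, hscs⟩ := crossing_pair hχ hi₀odd hχs₀
  have hsedge : s ∈ (C i₀).edges := by
    by_contra hmem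
    exact hscs (if_neg hmem)
  have hsG : s ∈ G.edgeSet := (C i₀).edges_subset_edgeSet hsedge
  -- s is a crossing edge, hence in range e
  obtain ⟨u', v', rfl⟩ : ∃ u' v', s = s(u', v') := ⟨s.out.1, s.out.2, by
    rw [Sym2.mk, Prod.mk.eta, s.out_eq]⟩
  have hne' : u' ≠ v' := by
    intro hh
    rw [hh] at hsG
    exact G.irrefl (G.mem_edgeSet.1 hsG)
  have hxor' : u' ∈ S ↔ ¬ v' ∈ S := by
    by_cases hu' : u' ∈ S <;> by_cases hv' : v' ∈ S
    · exfalso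
      rw [card_filter_sym2 S hne', if_pos hu', if_pos hv', Nat.odd_iff] at hsodd
      omega
    · tauto
    · tauto
    · exfalso
      rw [card_filter_sym2 S hne', if_neg hu', if_neg hv', Nat.odd_iff] at hsodd
      omega
  obtain ⟨j, hj⟩ := hcross u' v' (G.mem_edgeSet.1 hsG) hxor'
  have hjcr : j ∈ cr := by
    rw [hcr, Finset.mem_filter]
    exact ⟨Finset.mem_univ j, by rw [hj]; exact hsodd⟩
  have hjne : j ≠ i₀ := by
    intro hh
    apply hsne
    rw [← hj, hh]
  have hjlt : ¬ j < i₀ := fun hlt => (he2 j i₀ hlt) (hj ▸ hsedge)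
  have : j ≤ i₀ := cr.le_max' j hjcr
  rcases lt_or_eq_of_le this with hlt | heq
  · exact hjlt hlt
  · exact hjne heq

end WFCB3

namespace WFCB4
open WFCB WFCB2 WFCB3
set_option linter.unusedSectionVars false
variable {V : Type} [Fintype V] [DecidableEq V] {G : SimpleGraph V}
variable {π : Type} [Group π] {v₀ : V} (h : G.Walk v₀ v₀ → π)
variable (hone : h Walk.nil = 1)
variable (hmul : ∀ w₁ w₂ : G.Walk v₀ v₀, h (w₁.append w₂) = h w₁ * h w₂)
variable (hinv : ∀ (u w : V) (a : G.Adj u w) (p : G.Walk v₀ u) (q : G.Walk u v₀),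
      h (p.append q) = h (p.append ((Walk.cons a (Walk.cons a.symm Walk.nil)).append q)))

include hone hmul hinv

lemma cancel : ∀ {x y : V} (t : G.Walk x y) (p : G.Walk v₀ x) (q : G.Walk x v₀),
    h (p.append q) = h (p.append (t.append (t.reverse.append q))) := by
  intro x y t
  induction t with
  | nil => intro p q; simp
  | cons a t' ih =>
      intro p q
      rw [hinv _ _ a p q]
      have e1 : p.append ((Walk.cons a (Walk.cons a.symm Walk.nil)).append q)
          = (p.append (Walk.cons a Walk.nil)).append (Walk.cons a.symm q) := by
        simp [Walk.cons_append, ← Walk.append_assoc, Walk.nil_append]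
      have h2 := ih (p.append (Walk.cons a Walk.nil)) (Walk.cons a.symm q)
      have e2 : (p.append (Walk.cons a Walk.nil)).append
            (t'.append (t'.reverse.append (Walk.cons a.symm q)))
          = p.append ((Walk.cons a t').append (((Walk.cons a t').reverse).append q)) := by
        simp [Walk.reverse_cons, Walk.cons_append, ← Walk.append_assoc, Walk.nil_append,
          Walk.reverse_append, Walk.reverse_nil]
      rw [e1, h2, e2]

/-- `h` of a walk conjugated by connecting paths. -/
def Fh (σ' : ∀ x : V, G.Walk v₀ x) {x y : V} (w : G.Walk x y) : π :=
  h ((σ' x).append (w.append (σ' y).reverse))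

variable (σ' : ∀ x : V, G.Walk v₀ x)

lemma h_retrace (x : V) : h ((σ' x).append (σ' x).reverse) = 1 := by
  have hc := cancel h hone hmul hinv (σ' x) Walk.nil Walk.nil
  simp only [Walk.nil_append, Walk.append_nil] at hc
  rw [← hc, hone]

lemma Fh_nil_eq_one (x : V) : Fh h σ' (Walk.nil : G.Walk x x) = 1 := by
  unfold Fh
  simp only [Walk.nil_append]
  exact h_retrace h hone hmul hinv σ' x

lemma Fh_closed (hσ'v₀ : σ' v₀ = Walk.nil) (w : G.Walk v₀ v₀) : Fh h σ' w = h w := by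
  unfold Fh
  rw [hσ'v₀]
  simp only [Walk.nil_append, Walk.reverse_nil, Walk.append_nil]

lemma Fh_append {x y z : V} (w₁ : G.Walk x y) (w₂ : G.Walk y z) :
    Fh h σ' (w₁.append w₂) = Fh h σ' w₁ * Fh h σ' w₂ := by
  unfold Fh
  rw [← hmul]
  have e1 : ((σ' x).append (w₁.append (σ' y).reverse)).append
        ((σ' y).append (w₂.append (σ' z).reverse))
      = ((σ' x).append w₁).append ((σ' y).reverse.append
          ((σ' y).reverse.reverse.append (w₂.append (σ' z).reverse))) := by
    simp [← Walk.append_assoc, Walk.reverse_reverse]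
  rw [e1, ← cancel h hone hmul hinv (σ' y).reverse ((σ' x).append w₁)
    (w₂.append (σ' z).reverse)]
  simp [← Walk.append_assoc]

lemma Fh_edge_pair (x y : V) (a : G.Adj x y) :
    Fh h σ' (Walk.cons a Walk.nil) * Fh h σ' (Walk.cons a.symm Walk.nil) = 1 := by
  rw [← Fh_append h hone hmul hinv σ']
  have e0 : (Walk.cons a Walk.nil).append (Walk.cons a.symm Walk.nil)
      = Walk.cons a (Walk.cons a.symm Walk.nil) := rfl
  rw [e0]
  unfold Fh
  have e1 : (σ' x).append ((Walk.cons a (Walk.cons a.symm Walk.nil)).append (σ' x).reverse)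
      = (σ' x).append ((Walk.cons a (Walk.cons a.symm Walk.nil)).append ((σ' x).reverse)) := rfl
  rw [e1, ← hinv _ _ a (σ' x) (σ' x).reverse]
  exact h_retrace h hone hmul hinv σ' x

lemma Fh_edge_inv {x y : V} (a : G.Adj x y) :
    Fh h σ' (Walk.cons a.symm Walk.nil) = (Fh h σ' (Walk.cons a Walk.nil))⁻¹ := by
  exact (inv_eq_of_mul_eq_one_right (Fh_edge_pair h hone hmul hinv σ' x y a)).symm

end WFCB4

namespace WFCB5
open WFCB WFCB2 WFCB3
set_option linter.unusedSectionVars false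
variable {V : Type} [Fintype V] [DecidableEq V] {G : SimpleGraph V}

lemma path_unique {T : SimpleGraph V} (hac : T.IsAcyclic) {u w : V} (p q : T.Walk u w)
    (hp : p.IsPath) (hq : q.IsPath) : p = q := by
  have hu := isAcyclic_iff_path_unique.1 hac
  exact Subtype.ext_iff.1 (hu ⟨p, hp⟩ ⟨q, hq⟩)

lemma single_edge_isPath {T : SimpleGraph V} {x y : V} (a : T.Adj x y) :
    (Walk.cons a Walk.nil : T.Walk x y).IsPath := by
  simp [Walk.cons_isPath_iff, a.ne]

lemma tree_dichotomy {T : SimpleGraph V} (hac : T.IsAcyclic) {v₀ : V}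
    (σ : ∀ x : V, T.Walk v₀ x) (hσ : ∀ x, (σ x).IsPath) {x y : V} (a : T.Adj x y) :
    σ y = (σ x).append (Walk.cons a Walk.nil)
      ∨ σ x = (σ y).append (Walk.cons a.symm Walk.nil) := by
  by_cases hx : x ∈ (σ y).support
  · left
    have htake : ((σ y).takeUntil x hx).IsPath := (hσ y).takeUntil hx
    have hdrop : ((σ y).dropUntil x hx).IsPath := (hσ y).dropUntil hx
    have hdrop_eq : (σ y).dropUntil x hx = Walk.cons a Walk.nil :=
      path_unique hac _ _ hdrop (single_edge_isPath a)
    have htake_eq : (σ y).takeUntil x hx = σ x := path_unique hac _ _ htake (hσ x)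
    conv_lhs => rw [← Walk.take_spec (σ y) hx]
    rw [hdrop_eq, htake_eq]
  · right
    have hQ : ((σ y).append (Walk.cons a.symm Walk.nil)).IsPath := by
      rw [← Walk.isPath_reverse_iff]
      rw [Walk.reverse_append]
      simp only [Walk.reverse_cons, Walk.reverse_nil, Walk.nil_append, Walk.cons_append]
      rw [Walk.cons_isPath_iff]
      constructor
      · simpa [Walk.isPath_reverse_iff] using (hσ y)
      · intro hmem
        rw [Walk.support_reverse, List.mem_reverse] at hmem
        exact hx hmem
    exact path_unique hac _ _ (hσ x) hQ

end WFCB5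

namespace WFCB6
open WFCB WFCB2 WFCB3
set_option linter.unusedSectionVars false
variable {V : Type} [Fintype V] [DecidableEq V] {G : SimpleGraph V} {k : ℕ}

/-- The letter in the free group associated to traversing an edge. -/
noncomputable def letter (e : Fin k → Sym2 V) {x y : V} (_a : G.Adj x y) : FreeGroup (Fin k) :=
  match Fin.find? (fun i => decide (e i = s(x, y))) with
  | none => 1
  | some i => if (e i).out = (x, y) then FreeGroup.of i else (FreeGroup.of i)⁻¹

/-- The word of a walk in the free group on the distinguished edges. -/
noncomputable def chainWord (e : Fin k → Sym2 V) : ∀ {x y : V}, G.Walk x y → FreeGroup (Fin k)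
  | _, _, Walk.nil => 1
  | _, _, Walk.cons a w => letter e a * chainWord e w

variable (e : Fin k → Sym2 V)

lemma chainWord_nil {x : V} : chainWord e (Walk.nil : G.Walk x x) = 1 := rfl

lemma chainWord_cons {x y z : V} (a : G.Adj x y) (w : G.Walk y z) :
    chainWord e (Walk.cons a w) = letter e a * chainWord e w := by
  simp [chainWord]

lemma chainWord_append {x y z : V} (w₁ : G.Walk x y) (w₂ : G.Walk y z) :
    chainWord e (w₁.append w₂) = chainWord e w₁ * chainWord e w₂ := by
  induction w₁ with
  | nil => rw [Walk.nil_append, chainWord_nil, one_mul]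
  | cons a w ih => rw [Walk.cons_append, chainWord_cons, chainWord_cons, ih, mul_assoc]

lemma out_cases {x y : V} (hxy : x ≠ y) {s : Sym2 V} (hs : s = s(x, y)) :
    s.out = (x, y) ∨ s.out = (y, x) := by
  have h1 : s(s.out.1, s.out.2) = s(x, y) := by
    rw [← hs, Sym2.mk, Prod.mk.eta, s.out_eq]
  rw [Sym2.eq_iff] at h1
  rcases h1 with ⟨h1, h2⟩ | ⟨h1, h2⟩
  · left; rw [← h1, ← h2]
  · right; rw [← h1, ← h2]

lemma letter_not_mem {x y : V} (a : G.Adj x y) (hmem : s(x, y) ∉ Set.range e) :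
    letter e a = 1 := by
  unfold letter
  cases hfind : Fin.find? (fun i => decide (e i = s(x, y))) with
  | none => rfl
  | some i =>
      exact absurd ⟨i, of_decide_eq_true (Fin.mem_find?_iff.1 hfind).1⟩ hmem

lemma letter_mem (hinj : Function.Injective e) {x y : V} (a : G.Adj x y) (i : Fin k)
    (hi : e i = s(x, y)) :
    letter e a = if (e i).out = (x, y) then FreeGroup.of i else (FreeGroup.of i)⁻¹ := by
  unfold letter
  have hfind : Fin.find? (fun j => decide (e j = s(x, y))) = some i := by
    rw [← Option.mem_def, Fin.mem_find?_iff]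
    refine ⟨decide_eq_true hi, fun j hjlt hj => ?_⟩
    have hji : j = i := hinj ((of_decide_eq_true hj).trans hi.symm)
    exact absurd hjlt (by rw [hji]; exact lt_irrefl i)
  rw [hfind]

lemma letter_symm (hinj : Function.Injective e) {x y : V} (a : G.Adj x y) :
    letter e a.symm = (letter e a)⁻¹ := by
  by_cases hmem : s(x, y) ∈ Set.range e
  · obtain ⟨i, hi⟩ := hmem
    have hi' : e i = s(y, x) := by rw [hi, Sym2.eq_swap]
    rw [letter_mem e hinj a i hi, letter_mem e hinj a.symm i hi']
    have hx : x ≠ y := a.ne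
    have hxy' : ((x, y) : V × V) ≠ (y, x) := fun hh => hx (Prod.mk.inj hh).1
    have hyx' : ((y, x) : V × V) ≠ (x, y) := fun hh => hx (Prod.mk.inj hh).2
    rcases out_cases hx hi with ho | ho
    · rw [ho, if_neg hxy', if_pos rfl]
    · rw [ho, if_pos rfl, if_neg hyx', inv_inv]
  · rw [letter_not_mem e a hmem, letter_not_mem e a.symm
      (by rw [show s(y, x) = s(x, y) from Sym2.eq_swap]; exact hmem), inv_one]

lemma chainWord_reverse {x y : V} (w : G.Walk x y) (hinj : Function.Injective e) :
    chainWord e w.reverse = (chainWord e w)⁻¹ := by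
  induction w with
  | nil => simp [chainWord_nil]
  | cons a w ih =>
      rw [Walk.reverse_cons, chainWord_append, ih, chainWord_cons, chainWord_cons,
        chainWord_nil, letter_symm e hinj, mul_one, mul_inv_rev]

lemma chainWord_tree {x y : V} (w : G.Walk x y)
    (hw : ∀ s ∈ w.edges, s ∉ Set.range e) : chainWord e w = 1 := by
  induction w with
  | nil => rfl
  | cons a w ih =>
      rw [chainWord_cons, letter_not_mem e a (hw _ (by simp)), one_mul]
      exact ih fun s hs => hw s (by simp [hs])

lemma chainWord_mem_closure (hinj : Function.Injective e) {x y : V} (w : G.Walk x y) (n : ℕ)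
    (hw : ∀ j : Fin k, e j ∈ w.edges → n < (j : ℕ)) :
    chainWord e w ∈ Subgroup.closure (FreeGroup.of '' {j : Fin k | n < (j : ℕ)}) := by
  induction w with
  | nil => exact one_mem _
  | cons a w ih =>
      rename_i c b d
      rw [chainWord_cons]
      refine mul_mem ?_ (ih fun j hj => hw j (by simp [hj]))
      by_cases hmem : s(c, b) ∈ Set.range e
      · obtain ⟨i, hi⟩ := hmem
        rw [letter_mem e hinj a i hi]
        have hlt : n < (i : ℕ) := hw i (by rw [hi]; simp)
        have hof : FreeGroup.of i ∈
            Subgroup.closure (FreeGroup.of '' {j : Fin k | n < (j : ℕ)}) :=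
          Subgroup.subset_closure ⟨i, hlt, rfl⟩
        by_cases ho : (e i).out = (c, b)
        · rw [if_pos ho]; exact hof
        · rw [if_neg ho]; exact inv_mem hof
      · rw [letter_not_mem e a hmem]
        exact one_mem _

/-- Split a walk at the first occurrence of an edge. -/
lemma walk_split {x y : V} (w : G.Walk x y) {s : Sym2 V} (hs : s ∈ w.edges) :
    ∃ (u v' : V) (A : G.Walk x u) (a : G.Adj u v') (B : G.Walk v' y),
      w = A.append (Walk.cons a B) ∧ s = s(u, v') ∧ s ∉ A.edges := by
  induction w with
  | nil => simp at hs
  | cons a w ih =>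
      rename_i c b d
      by_cases h0 : s = s(c, b)
      · exact ⟨c, b, Walk.nil, a, w, rfl, h0, by simp⟩
      · have hs' : s ∈ w.edges := by
          rw [Walk.edges_cons, List.mem_cons] at hs
          rcases hs with h1 | h1
          · exact absurd h1 h0
          · exact h1
        obtain ⟨u, v', A, a', B, hweq, hseq, hsA⟩ := ih hs'
        refine ⟨u, v', Walk.cons a A, a', B, ?_, hseq, ?_⟩
        · rw [Walk.cons_append, hweq]
        · intro hmem
          rw [Walk.edges_cons, List.mem_cons] at hmem
          rcases hmem with h1 | h1
          · exact h0 h1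
          · exact hsA h1

end WFCB6

namespace WFCB7
set_option linter.unusedSectionVars false
variable {k : ℕ}

noncomputable def aN (A B : Fin k → FreeGroup (Fin k)) (ε : Fin k → Bool) : ℕ → FreeGroup (Fin k)
  | n =>
    if h : n < k then
      let L : FreeGroup (Fin k) →* FreeGroup (Fin k) :=
        FreeGroup.lift (fun j : Fin k => if _hj : n < (j : ℕ) then aN A B ε j else 1)
      if ε ⟨n, h⟩ then (L (A ⟨n, h⟩))⁻¹ * FreeGroup.of ⟨n, h⟩ * (L (B ⟨n, h⟩))⁻¹
      else L (B ⟨n, h⟩) * (FreeGroup.of ⟨n, h⟩)⁻¹ * L (A ⟨n, h⟩)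
    else 1
termination_by n => k - n
decreasing_by
  · have := j.2
    omega

variable (A B : Fin k → FreeGroup (Fin k)) (ε : Fin k → Bool)

/-- truncated lift -/
noncomputable def Ln (n : ℕ) : FreeGroup (Fin k) →* FreeGroup (Fin k) :=
  FreeGroup.lift (fun j : Fin k => if n < (j : ℕ) then aN A B ε j else 1)

noncomputable def alp : FreeGroup (Fin k) →* FreeGroup (Fin k) :=
  FreeGroup.lift (fun j : Fin k => aN A B ε j)

lemma aN_eq (n : ℕ) (h : n < k) :
    aN A B ε n =
      if ε ⟨n, h⟩ then (Ln A B ε n (A ⟨n, h⟩))⁻¹ * FreeGroup.of ⟨n, h⟩ * (Ln A B ε n (B ⟨n, h⟩))⁻¹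
      else Ln A B ε n (B ⟨n, h⟩) * (FreeGroup.of ⟨n, h⟩)⁻¹ * Ln A B ε n (A ⟨n, h⟩) := by
  rw [aN]
  rw [dif_pos h]
  rfl

lemma agree (n : ℕ) {x : FreeGroup (Fin k)}
    (hx : x ∈ Subgroup.closure (FreeGroup.of '' {j : Fin k | n < (j : ℕ)})) :
    alp A B ε x = Ln A B ε n x := by
  have heq : Set.EqOn (alp A B ε) (Ln A B ε n)
      (FreeGroup.of '' {j : Fin k | n < (j : ℕ)}) := by
    rintro x ⟨j, hj, rfl⟩
    simp only [alp, Ln, FreeGroup.lift_apply_of]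
    have hj' : n < (j : ℕ) := hj
    rw [if_pos hj']
  exact MonoidHom.eqOn_closure heq hx

variable (w : Fin k → FreeGroup (Fin k))
variable (hdecomp : ∀ i, w i
    = A i * (if ε i then FreeGroup.of i else (FreeGroup.of i)⁻¹) * B i)
variable (hA : ∀ i : Fin k, A i ∈ Subgroup.closure (FreeGroup.of '' {j : Fin k | (i : ℕ) < (j : ℕ)}))
variable (hB : ∀ i : Fin k, B i ∈ Subgroup.closure (FreeGroup.of '' {j : Fin k | (i : ℕ) < (j : ℕ)}))

include hdecomp hA hB

lemma alpha_w (i : Fin k) : alp A B ε (w i) = FreeGroup.of i := by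
  have hAi : alp A B ε (A i) = Ln A B ε i (A i) := agree A B ε i (hA i)
  have hBi : alp A B ε (B i) = Ln A B ε i (B i) := agree A B ε i (hB i)
  have hof : alp A B ε (FreeGroup.of i) = aN A B ε i := by
    simp [alp, FreeGroup.lift_apply_of]
  rw [hdecomp i, map_mul, map_mul]
  have hieta : (⟨(i : ℕ), i.2⟩ : Fin k) = i := Fin.eta i i.2
  cases hε : ε i with
  | true =>
      rw [if_pos rfl]
      rw [hof, aN_eq A B ε i i.2]
      rw [hieta, if_pos hε]
      rw [hAi, hBi]
      group
  | false =>
      rw [if_neg Bool.false_ne_true]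
      rw [map_inv, hof, aN_eq A B ε i i.2]
      rw [hieta, if_neg (by rw [hε]; exact Bool.false_ne_true)]
      rw [hAi, hBi]
      group

lemma W_alpha_of : ∀ i : Fin k, FreeGroup.lift w (alp A B ε (FreeGroup.of i)) = FreeGroup.of i := by
  by_contra hcon
  push_neg at hcon
  obtain ⟨i₀, hi₀⟩ := hcon
  set Bad : Finset (Fin k) := Finset.univ.filter
    (fun i => FreeGroup.lift w (alp A B ε (FreeGroup.of i)) ≠ FreeGroup.of i) with hBad
  have hne : Bad.Nonempty := ⟨i₀, by simp [hBad, hi₀]⟩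
  set m := Bad.max' hne with hm
  have hmmem : m ∈ Bad := Bad.max'_mem hne
  have hmbad : FreeGroup.lift w (alp A B ε (FreeGroup.of m)) ≠ FreeGroup.of m := by
    simpa [hBad] using hmmem
  apply hmbad
  have hgood : ∀ j : Fin k, (m : ℕ) < (j : ℕ) →
      FreeGroup.lift w (alp A B ε (FreeGroup.of j)) = FreeGroup.of j := by
    intro j hj
    by_contra hbadj
    have : j ∈ Bad := by simp [hBad, hbadj]
    have := Bad.le_max' j this
    rw [← hm] at this
    exact absurd hj (by omega)
  have hEq : ∀ {x : FreeGroup (Fin k)},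
      x ∈ Subgroup.closure (FreeGroup.of '' {j : Fin k | (m : ℕ) < (j : ℕ)}) →
      FreeGroup.lift w (alp A B ε x) = x := by
    intro x hx
    have heq : Set.EqOn ((FreeGroup.lift w).comp (alp A B ε)) (MonoidHom.id _)
        (FreeGroup.of '' {j : Fin k | (m : ℕ) < (j : ℕ)}) := by
      rintro y ⟨j, hj, rfl⟩
      simpa using hgood j hj
    exact MonoidHom.eqOn_closure heq hx
  have hof : alp A B ε (FreeGroup.of m) = aN A B ε m := by simp [alp, FreeGroup.lift_apply_of]
  have hieta : (⟨(m : ℕ), m.2⟩ : Fin k) = m := Fin.eta m m.2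
  have hAm : Ln A B ε m (A m) = alp A B ε (A m) := (agree A B ε m (hA m)).symm
  have hBm : Ln A B ε m (B m) = alp A B ε (B m) := (agree A B ε m (hB m)).symm
  rw [hof, aN_eq A B ε m m.2, hieta]
  cases hε : ε m with
  | true =>
      rw [if_pos rfl, hAm, hBm]
      rw [map_mul, map_mul, map_inv, map_inv, hEq (hA m), hEq (hB m)]
      have hwm : FreeGroup.lift w (FreeGroup.of m) = w m := FreeGroup.lift_apply_of
      rw [hwm, hdecomp m, if_pos hε]
      group
  | false =>
      rw [if_neg Bool.false_ne_true, hAm, hBm]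
      rw [map_mul, map_mul, map_inv, hEq (hA m), hEq (hB m)]
      have hwm : FreeGroup.lift w (FreeGroup.of m) = w m := FreeGroup.lift_apply_of
      rw [hwm, hdecomp m, if_neg (by rw [hε]; exact Bool.false_ne_true)]
      group

lemma W_bijective : Function.Bijective (FreeGroup.lift w) := by
  have h1 : ∀ x, alp A B ε (FreeGroup.lift w x) = x := by
    intro x
    have : (alp A B ε).comp (FreeGroup.lift w) = MonoidHom.id _ := by
      apply FreeGroup.ext_hom
      intro i
      simp only [MonoidHom.comp_apply, MonoidHom.id_apply, FreeGroup.lift_apply_of]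
      exact alpha_w A B ε w hdecomp hA hB i
    calc alp A B ε (FreeGroup.lift w x) = ((alp A B ε).comp (FreeGroup.lift w)) x := rfl
    _ = x := by rw [this]; rfl
  have h2 : ∀ x, FreeGroup.lift w (alp A B ε x) = x := by
    intro x
    have : (FreeGroup.lift w).comp (alp A B ε) = MonoidHom.id _ := by
      apply FreeGroup.ext_hom
      intro i
      simp only [MonoidHom.comp_apply, MonoidHom.id_apply]
      exact W_alpha_of A B ε w hdecomp hA hB i
    calc FreeGroup.lift w (alp A B ε x) = ((FreeGroup.lift w).comp (alp A B ε)) x := rfl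
    _ = x := by rw [this]; rfl
  exact ⟨Function.LeftInverse.injective h1, Function.RightInverse.surjective h2⟩

end WFCB7

namespace WFCB8
open WFCB WFCB2 WFCB3 WFCB4 WFCB5 WFCB6
set_option linter.unusedSectionVars false
variable {V : Type} [Fintype V] [DecidableEq V] {G : SimpleGraph V} {k : ℕ}
variable {π : Type} [Group π] {v₀ : V} (h : G.Walk v₀ v₀ → π)
variable (hone : h Walk.nil = 1)
variable (hmul : ∀ w₁ w₂ : G.Walk v₀ v₀, h (w₁.append w₂) = h w₁ * h w₂)
variable (hinv : ∀ (u w : V) (a : G.Adj u w) (p : G.Walk v₀ u) (q : G.Walk u v₀),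
      h (p.append q) = h (p.append ((Walk.cons a (Walk.cons a.symm Walk.nil)).append q)))
variable (σ' : ∀ x : V, G.Walk v₀ x)
variable (e : Fin k → Sym2 V)
variable (hdic : ∀ {x y : V} (a : G.Adj x y), s(x, y) ∉ Set.range e →
    (σ' y = (σ' x).append (Walk.cons a Walk.nil)
      ∨ σ' x = (σ' y).append (Walk.cons a.symm Walk.nil)))

include hone hmul hinv hdic

lemma Fh_edge_tree {x y : V} (a : G.Adj x y) (hmem : s(x, y) ∉ Set.range e) :
    Fh h σ' (Walk.cons a Walk.nil) = 1 := by
  unfold Fh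
  rcases hdic a hmem with hd | hd
  · rw [hd]
    have e1 : (σ' x).append ((Walk.cons a Walk.nil).append
          ((σ' x).append (Walk.cons a Walk.nil)).reverse)
        = (σ' x).append ((Walk.cons a (Walk.cons a.symm Walk.nil)).append (σ' x).reverse) := by
      simp [Walk.reverse_append, Walk.reverse_cons, Walk.reverse_nil, Walk.cons_append,
        Walk.nil_append, ← Walk.append_assoc]
    rw [e1, ← hinv _ _ a (σ' x) (σ' x).reverse]
    exact h_retrace h hone hmul hinv σ' x
  · rw [hd]
    have e2 : ((σ' y).append (Walk.cons a.symm Walk.nil)).append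
          ((Walk.cons a Walk.nil).append (σ' y).reverse)
        = (σ' y).append ((Walk.cons a.symm (Walk.cons a.symm.symm Walk.nil)).append
            (σ' y).reverse) := by
      simp [Walk.cons_append, Walk.nil_append, ← Walk.append_assoc]
    rw [e2, ← hinv _ _ a.symm (σ' y) (σ' y).reverse]
    exact h_retrace h hone hmul hinv σ' y

variable (hadj : ∀ i : Fin k, G.Adj (e i).out.1 (e i).out.2)
variable (hinj : Function.Injective e)

include hinj

lemma lift_Ge_letter {x y : V} (a : G.Adj x y) :
    FreeGroup.lift (fun i => Fh h σ' (Walk.cons (hadj i) Walk.nil)) (letter e a)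
      = Fh h σ' (Walk.cons a Walk.nil) := by
  by_cases hmem : s(x, y) ∈ Set.range e
  · obtain ⟨i, hi⟩ := hmem
    rw [letter_mem e hinj a i hi]
    rcases out_cases a.ne hi with ho | ho
    · rw [if_pos ho, FreeGroup.lift_apply_of]
      have hx1 : (e i).out.1 = x := congrArg Prod.fst ho
      have hy1 : (e i).out.2 = y := congrArg Prod.snd ho
      subst hx1
      subst hy1
      rfl
    · have hyx' : ((y, x) : V × V) ≠ (x, y) := fun hh => a.ne (Prod.mk.inj hh).2
      rw [ho, if_neg hyx', map_inv, FreeGroup.lift_apply_of]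
      have hx1 : (e i).out.1 = y := congrArg Prod.fst ho
      have hy1 : (e i).out.2 = x := congrArg Prod.snd ho
      have hGe : Fh h σ' (Walk.cons (hadj i) Walk.nil)
          = Fh h σ' (Walk.cons a.symm Walk.nil) := by
        subst hx1
        subst hy1
        rfl
      rw [hGe, Fh_edge_inv h hone hmul hinv σ' a, inv_inv]
  · rw [letter_not_mem e a hmem, map_one]
    exact (Fh_edge_tree h hone hmul hinv σ' e hdic a hmem).symm

lemma lift_Ge_chainWord {x y : V} (w : G.Walk x y) :
    FreeGroup.lift (fun i => Fh h σ' (Walk.cons (hadj i) Walk.nil)) (chainWord e w)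
      = Fh h σ' w := by
  induction w with
  | nil => rw [chainWord_nil, map_one, Fh_nil_eq_one h hone hmul hinv σ']
  | cons a w ih =>
      rw [chainWord_cons, map_mul, ih,
        lift_Ge_letter h hone hmul hinv σ' e hdic hadj hinj a]
      rw [← Fh_append h hone hmul hinv σ']
      rfl

end WFCB8

open WFCB WFCB2 WFCB3 WFCB4 WFCB5 WFCB6 WFCB7 WFCB8 in
theorem stmt_8 {V : Type} [Fintype V] [DecidableEq V] (G : SimpleGraph V)
    (hconn : G.Connected) (v₀ : V) (k : ℕ) (r : Fin k → V)
    (C : ∀ i : Fin k, G.Walk (r i) (r i)) (hcyc : ∀ i, (C i).IsCycle)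
    (hindep : LinearIndependent (ZMod 2) fun i => walkChain (C i))
    (hspan : ∀ c : Sym2 V → ZMod 2, cycleCond G c →
      c ∈ Submodule.span (ZMod 2) (Set.range fun i => walkChain (C i)))
    (hwf : ∃ e : Fin k → Sym2 V, (∀ i, e i ∈ (C i).edges) ∧
      ∀ i j, i < j → e i ∉ (C j).edges)
    (π : Type) [Group π] (h : G.Walk v₀ v₀ → π)
    (hone : h Walk.nil = 1)
    (hmul : ∀ w₁ w₂ : G.Walk v₀ v₀, h (w₁.append w₂) = h w₁ * h w₂)
    (hinv : ∀ (u w : V) (a : G.Adj u w) (p : G.Walk v₀ u) (q : G.Walk u v₀),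
      h (p.append q) = h (p.append ((Walk.cons a (Walk.cons a.symm Walk.nil)).append q)))
    (huniv : ∀ (H : Type) [Group H] (f : G.Walk v₀ v₀ → H),
      f Walk.nil = 1 →
      (∀ w₁ w₂ : G.Walk v₀ v₀, f (w₁.append w₂) = f w₁ * f w₂) →
      (∀ (u w : V) (a : G.Adj u w) (p : G.Walk v₀ u) (q : G.Walk u v₀),
        f (p.append q) =
          f (p.append ((Walk.cons a (Walk.cons a.symm Walk.nil)).append q))) →
      ∃! φ : π →* H, ∀ w : G.Walk v₀ v₀, φ (h w) = f w) :
    ∃ p : ∀ i : Fin k, G.Walk v₀ (r i),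
      Function.Bijective
        (FreeGroup.lift fun i : Fin k =>
          h ((p i).append ((C i).append (p i).reverse))) := by
  classical
  obtain ⟨e, he1, he2⟩ := hwf
  have hinj : Function.Injective e := e_injective he1 he2
  set T := G.deleteEdges (Set.range e) with hT
  have hac : T.IsAcyclic := T_acyclic hspan he1 he2
  have hTconn : T.Connected := T_connected hconn hspan he1 he2 hcyc
  have htree : T.IsTree := ⟨hTconn, hac⟩
  choose σ hσ using fun x => htree.existsUnique_path v₀ x
  have hσpath : ∀ x, (σ x).IsPath := fun x => (hσ x).1
  have hσuniq : ∀ (x : V) (q : T.Walk v₀ x), q.IsPath → q = σ x := fun x q hq => (hσ x).2 q hq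
  have hTle : T ≤ G := SimpleGraph.deleteEdges_le _
  have hTedge : ∀ {x y : V} (p : T.Walk x y), ∀ s ∈ p.edges, s ∈ G.edgeSet :=
    fun p s hs => SimpleGraph.edgeSet_mono hTle (p.edges_subset_edgeSet hs)
  let σG : ∀ x : V, G.Walk v₀ x := fun x => (σ x).transfer G (hTedge (σ x))
  have htrans_congr : ∀ {x y : V} (p q : T.Walk x y), p = q → ∀ (hp) (hq),
      p.transfer G hp = q.transfer G hq := by
    intro x y p q hpq hp hq
    subst hpq
    rfl
  have hσGedges : ∀ x : V, ∀ s ∈ (σG x).edges, s ∉ Set.range e := by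
    intro x s hs
    rw [show (σG x).edges = (σ x).edges from (σ x).edges_transfer _] at hs
    have := (σ x).edges_subset_edgeSet hs
    rw [hT, SimpleGraph.edgeSet_deleteEdges] at this
    exact this.2
  have hσv₀ : σ v₀ = Walk.nil := (hσuniq v₀ Walk.nil Walk.IsPath.nil).symm
  have hσGv₀ : σG v₀ = Walk.nil := by
    show (σ v₀).transfer G _ = Walk.nil
    rw [htrans_congr (σ v₀) Walk.nil hσv₀ _ (by simp)]
    rfl
  have hdicG : ∀ {x y : V} (a : G.Adj x y), s(x, y) ∉ Set.range e →
      (σG y = (σG x).append (Walk.cons a Walk.nil)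
        ∨ σG x = (σG y).append (Walk.cons a.symm Walk.nil)) := by
    intro x y a hmem
    have aT : T.Adj x y := by rw [hT, SimpleGraph.deleteEdges_adj]; exact ⟨a, hmem⟩
    rcases tree_dichotomy hac σ hσpath aT with hd | hd
    · left
      show (σ y).transfer G _ = _
      rw [htrans_congr (σ y) ((σ x).append (Walk.cons aT Walk.nil)) hd _
        (hd ▸ hTedge (σ y)), Walk.transfer_append]
      rfl
    · right
      show (σ x).transfer G _ = _
      rw [htrans_congr (σ x) ((σ y).append (Walk.cons aT.symm Walk.nil)) hd _
        (hd ▸ hTedge (σ x)), Walk.transfer_append]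
      rfl
  have hadj : ∀ i : Fin k, G.Adj (e i).out.1 (e i).out.2 := by
    intro i
    have hG : e i ∈ G.edgeSet := (C i).edges_subset_edgeSet (he1 i)
    have hout : s((e i).out.1, (e i).out.2) = e i := by
      rw [Sym2.mk, Prod.mk.eta, (e i).out_eq]
    exact G.mem_edgeSet.1 (by rw [hout]; exact hG)
  -- the universal homomorphism to the free group
  have hf1 : chainWord e (Walk.nil : G.Walk v₀ v₀) = 1 := rfl
  have hf2 : ∀ w₁ w₂ : G.Walk v₀ v₀, chainWord e (w₁.append w₂)
      = chainWord e w₁ * chainWord e w₂ := fun w₁ w₂ => chainWord_append e w₁ w₂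
  have hf3 : ∀ (u w : V) (a : G.Adj u w) (p : G.Walk v₀ u) (q : G.Walk u v₀),
      chainWord e (p.append q) =
        chainWord e (p.append ((Walk.cons a (Walk.cons a.symm Walk.nil)).append q)) := by
    intro u w a p q
    rw [chainWord_append, chainWord_append, chainWord_append, chainWord_cons, chainWord_cons,
      chainWord_nil, letter_symm e hinj a, mul_one, mul_inv_cancel, one_mul]
  obtain ⟨φ₀, hφ₀, _⟩ := huniv (FreeGroup (Fin k)) (fun w => chainWord e w) hf1 hf2 hf3
  set Ge : Fin k → π := fun i => Fh h σG (Walk.cons (hadj i) Walk.nil) with hGe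
  set ψ' : FreeGroup (Fin k) →* π := FreeGroup.lift Ge with hψ'
  have hGecw : ∀ {x y : V} (w : G.Walk x y), ψ' (chainWord e w) = Fh h σG w := by
    intro x y w
    exact lift_Ge_chainWord h hone hmul hinv σG e hdicG hadj hinj w
  -- ψ' has a two-sided inverse φ₀
  obtain ⟨φh, hφh, hφuniq⟩ := huniv π h hone hmul hinv
  have hid : (MonoidHom.id π) = φh := hφuniq _ (fun w => rfl)
  have hcomp : ψ'.comp φ₀ = φh := by
    apply hφuniq
    intro w
    show ψ' (φ₀ (h w)) = h w
    rw [hφ₀ w, hGecw w, Fh_closed h hone hmul hinv σG hσGv₀ w]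
  have hψφ : ∀ y : π, ψ' (φ₀ y) = y := by
    intro y
    have hh : ψ'.comp φ₀ = MonoidHom.id π := hcomp.trans hid.symm
    calc ψ' (φ₀ y) = (ψ'.comp φ₀) y := rfl
    _ = y := by rw [hh]; rfl
  have hφψ : ∀ x : FreeGroup (Fin k), φ₀ (ψ' x) = x := by
    have hh : φ₀.comp ψ' = MonoidHom.id (FreeGroup (Fin k)) := by
      apply FreeGroup.ext_hom
      intro i
      show φ₀ (ψ' (FreeGroup.of i)) = FreeGroup.of i
      rw [hψ', FreeGroup.lift_apply_of, hGe]
      show φ₀ (h ((σG (e i).out.1).append ((Walk.cons (hadj i) Walk.nil).append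
        (σG (e i).out.2).reverse))) = FreeGroup.of i
      rw [hφ₀]
      rw [chainWord_append, chainWord_append, chainWord_cons, chainWord_nil, mul_one,
        chainWord_tree e _ (fun s hs => hσGedges _ s hs),
        chainWord_reverse e _ hinj, chainWord_tree e _ (fun s hs => hσGedges _ s hs),
        inv_one, mul_one, one_mul]
      rw [letter_mem e hinj (hadj i) i (by rw [Sym2.mk, Prod.mk.eta, (e i).out_eq])]
      rw [if_pos Prod.mk.eta.symm]
    intro x
    calc φ₀ (ψ' x) = (φ₀.comp ψ') x := rfl
    _ = x := by rw [hh]; rfl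
  have hψ'bij : Function.Bijective ψ' := by
    constructor
    · exact Function.LeftInverse.injective hφψ
    · intro y
      exact ⟨φ₀ y, hψφ y⟩
  -- the change of basis W is bijective
  have hsplit := fun i => walk_split (C i) (he1 i)
  choose uu vv AA adj BB hweq hseq hsA using hsplit
  set Aw : Fin k → FreeGroup (Fin k) := fun i => chainWord e (AA i) with hAw
  set Bw : Fin k → FreeGroup (Fin k) := fun i => chainWord e (BB i) with hBw
  set ε : Fin k → Bool := fun i => decide ((e i).out = (uu i, vv i)) with hε
  have hsB : ∀ i, e i ∉ (BB i).edges := by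
    intro i
    have hnd := (hcyc i).isTrail.edges_nodup
    rw [hweq i, Walk.edges_append, Walk.edges_cons] at hnd
    have h2 := hnd.of_append_right
    have hnotmem := (List.nodup_cons.1 h2).1
    rw [hseq i]
    exact hnotmem
  have hlt : ∀ i j : Fin k, e j ∈ (C i).edges → j ≠ i → (i : ℕ) < (j : ℕ) := by
    intro i j hjC hne
    have h1 : ¬ j < i := fun hlt' => he2 j i hlt' hjC
    have h2 : (j : ℕ) ≠ (i : ℕ) := fun hh => hne (Fin.ext hh)
    have h3 : ¬ (j : ℕ) < (i : ℕ) := by rw [← Fin.lt_def]; exact h1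
    omega
  have hltA : ∀ i j : Fin k, e j ∈ (AA i).edges → (i : ℕ) < (j : ℕ) := by
    intro i j hj
    have hjC : e j ∈ (C i).edges := by
      rw [hweq i, Walk.edges_append]
      exact List.mem_append_left _ hj
    exact hlt i j hjC (fun hji => hsA i (hji ▸ hj))
  have hltB : ∀ i j : Fin k, e j ∈ (BB i).edges → (i : ℕ) < (j : ℕ) := by
    intro i j hj
    have hjC : e j ∈ (C i).edges := by
      rw [hweq i, Walk.edges_append, Walk.edges_cons]
      exact List.mem_append_right _ (List.mem_cons_of_mem _ hj)
    exact hlt i j hjC (fun hji => hsB i (hji ▸ hj))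
  have hdecomp : ∀ i, chainWord e (C i)
      = Aw i * (if ε i then FreeGroup.of i else (FreeGroup.of i)⁻¹) * Bw i := by
    intro i
    conv_lhs => rw [hweq i]
    rw [chainWord_append, chainWord_cons, letter_mem e hinj (adj i) i (hseq i)]
    by_cases ho : (e i).out = (uu i, vv i)
    · rw [if_pos ho, if_pos (by rw [hε]; simpa using ho), ← mul_assoc]
    · rw [if_neg ho, if_neg (by rw [hε]; simpa using ho), ← mul_assoc]
  have hAcl : ∀ i : Fin k, Aw i ∈ Subgroup.closure
      (FreeGroup.of '' {j : Fin k | (i : ℕ) < (j : ℕ)}) :=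
    fun i => chainWord_mem_closure e hinj (AA i) i (hltA i)
  have hBcl : ∀ i : Fin k, Bw i ∈ Subgroup.closure
      (FreeGroup.of '' {j : Fin k | (i : ℕ) < (j : ℕ)}) :=
    fun i => chainWord_mem_closure e hinj (BB i) i (hltB i)
  have hWbij : Function.Bijective (FreeGroup.lift (fun i => chainWord e (C i))) :=
    W_bijective Aw Bw ε (fun i => chainWord e (C i)) hdecomp hAcl hBcl
  -- conclusion
  refine ⟨fun i => σG (r i), ?_⟩
  have hfinal : (FreeGroup.lift fun i : Fin k =>
        h ((σG (r i)).append ((C i).append (σG (r i)).reverse)))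
      = ψ'.comp (FreeGroup.lift (fun j => chainWord e (C j))) := by
    apply FreeGroup.ext_hom
    intro i
    rw [FreeGroup.lift_apply_of, MonoidHom.comp_apply, FreeGroup.lift_apply_of, hGecw (C i)]
    rfl
  rw [hfinal, MonoidHom.coe_comp]
  exact Function.Bijective.comp hψ'bij hWbij
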